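/- Consider g(y) = log(2)·((1-y)·(1 + (1/2)·log(y/(1-y))) - h₂(y)/2) on (0,1/2] (the limiting derivative Ğ'_y(1)). Then g(1/2) = 0, g(y) → -∞ as y → 0⁺, g'(y) satisfies g'(1/2) = 0 and g'(y) → +∞ as y → 0⁺, and g''(y) = (y - log 2)/(2(1-y)y²) < 0 for y ∈ (0,1/2]; consequently g(y) < 0 for all y ∈ (0,1/2). -/

import Mathlib

/-- Binary entropy (base 2). -/
noncomputable def binEnt (x : ℝ) : ℝ := -x * Real.logb 2 x - (1 - x) * Real.logb 2 (1 - x)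

/-- The limiting derivative `Ğ'_y(1)` as a function of `y`. -/
noncomputable def gDer1 (y : ℝ) : ℝ :=
  Real.log 2 * ((1 - y) * (1 + 1 / 2 * Real.log (y / (1 - y))) - binEnt y / 2)


open Real Filter Set

noncomputable def fAux (y : ℝ) : ℝ :=
  Real.log 2 * (1 - y) + Real.log 2 / 2 * ((1 - y) * (Real.log y - Real.log (1 - y)))
    + (y * Real.log y + (1 - y) * Real.log (1 - y)) / 2

noncomputable def g1Aux (y : ℝ) : ℝ :=
  -Real.log 2 + Real.log 2 / 2 * y⁻¹ + (1 - Real.log 2) / 2 * (Real.log y - Real.log (1 - y))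

noncomputable def g2Aux (y : ℝ) : ℝ := (y - Real.log 2) / (2 * (1 - y) * y ^ 2)

lemma fAux_eq {y : ℝ} (hy : y ∈ Set.Ioo (0:ℝ) 1) : gDer1 y = fAux y := by
  obtain ⟨h0, h1⟩ := hy
  have h1' : 0 < 1 - y := by linarith
  have hL : Real.log 2 ≠ 0 := by positivity
  rw [gDer1, fAux, binEnt, Real.logb, Real.logb, Real.log_div h0.ne' h1'.ne']
  field_simp
  ring

lemma hasDerivAt_fAux {y : ℝ} (hy : y ∈ Set.Ioo (0:ℝ) 1) : HasDerivAt fAux (g1Aux y) y := by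
  obtain ⟨h0, h1⟩ := hy
  have h1' : 0 < 1 - y := by linarith
  have hone : HasDerivAt (fun y : ℝ => 1 - y) (-1) y := by
    simpa using (hasDerivAt_id y).const_sub 1
  have hlog : HasDerivAt Real.log y⁻¹ y := Real.hasDerivAt_log h0.ne'
  have hlog1 : HasDerivAt (fun y : ℝ => Real.log (1 - y)) (-1 / (1 - y)) y :=
    hone.log h1'.ne'
  have hdiff : HasDerivAt (fun y : ℝ => Real.log y - Real.log (1 - y))
      (y⁻¹ - -1 / (1 - y)) y := hlog.sub hlog1
  have hA : HasDerivAt (fun y : ℝ => Real.log 2 * (1 - y)) (Real.log 2 * -1) y :=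
    hone.const_mul _
  have hB : HasDerivAt (fun y : ℝ => Real.log 2 / 2 * ((1 - y) * (Real.log y - Real.log (1 - y))))
      (Real.log 2 / 2 * (-1 * (Real.log y - Real.log (1 - y)) + (1 - y) * (y⁻¹ - -1 / (1 - y)))) y :=
    (hone.mul hdiff).const_mul _
  have hC : HasDerivAt (fun y : ℝ => (y * Real.log y + (1 - y) * Real.log (1 - y)) / 2)
      ((1 * Real.log y + y * y⁻¹ + (-1 * Real.log (1 - y) + (1 - y) * (-1 / (1 - y)))) / 2) y :=
    (((hasDerivAt_id y).mul hlog).add (hone.mul hlog1)).div_const 2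
  have := (hA.add hB).add hC
  refine this.congr_deriv ?_
  rw [g1Aux]
  field_simp
  ring

lemma hasDerivAt_gDer1 {y : ℝ} (hy : y ∈ Set.Ioo (0:ℝ) 1) : HasDerivAt gDer1 (g1Aux y) y := by
  refine (hasDerivAt_fAux hy).congr_of_eventuallyEq ?_
  filter_upwards [Ioo_mem_nhds hy.1 hy.2] with z hz using fAux_eq hz

lemma hasDerivAt_g1Aux {y : ℝ} (hy : y ∈ Set.Ioo (0:ℝ) 1) : HasDerivAt g1Aux (g2Aux y) y := by
  obtain ⟨h0, h1⟩ := hy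
  have h1' : 0 < 1 - y := by linarith
  have hone : HasDerivAt (fun y : ℝ => 1 - y) (-1) y := by
    simpa using (hasDerivAt_id y).const_sub 1
  have hlog : HasDerivAt Real.log y⁻¹ y := Real.hasDerivAt_log h0.ne'
  have hlog1 : HasDerivAt (fun y : ℝ => Real.log (1 - y)) (-1 / (1 - y)) y :=
    hone.log h1'.ne'
  have hinv : HasDerivAt (fun y : ℝ => y⁻¹) (-(y^2)⁻¹) y := hasDerivAt_inv h0.ne'
  have := ((hasDerivAt_const y (-Real.log 2)).add (hinv.const_mul (Real.log 2 / 2))).add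
    ((hlog.sub hlog1).const_mul ((1 - Real.log 2) / 2))
  refine this.congr_deriv ?_
  rw [g2Aux]
  field_simp
  ring

lemma deriv_gDer1_eq {y : ℝ} (hy : y ∈ Set.Ioo (0:ℝ) 1) : deriv gDer1 y = g1Aux y :=
  (hasDerivAt_gDer1 hy).deriv

lemma g1Aux_half : g1Aux (1/2) = 0 := by
  rw [g1Aux]; norm_num

lemma log_two_big : (1:ℝ)/2 < Real.log 2 := by
  linarith [Real.log_two_gt_d9]

lemma g2Aux_neg {y : ℝ} (hy : y ∈ Set.Ioc (0:ℝ) (1/2)) : g2Aux y < 0 := by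
  rw [g2Aux]
  apply div_neg_of_neg_of_pos
  · linarith [log_two_big, hy.2]
  · have h1 : (0:ℝ) < 1 - y := by linarith [hy.2]
    have := hy.1
    positivity

lemma sderiv_eq {y : ℝ} (hy : y ∈ Set.Ioo (0:ℝ) 1) :
    deriv (deriv gDer1) y = g2Aux y := by
  have hev : deriv gDer1 =ᶠ[nhds y] g1Aux := by
    filter_upwards [Ioo_mem_nhds hy.1 hy.2] with z hz using deriv_gDer1_eq hz
  rw [hev.deriv_eq, (hasDerivAt_g1Aux hy).deriv]

lemma gDer1_half : gDer1 (1/2) = 0 := by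
  rw [fAux_eq (by norm_num : (1:ℝ)/2 ∈ Set.Ioo (0:ℝ) 1), fAux]
  have : Real.log (1/2) = -Real.log 2 := by
    rw [show (1:ℝ)/2 = 2⁻¹ by norm_num, Real.log_inv]
  norm_num [this]
  ring

lemma g1Aux_pos {y : ℝ} (hy : y ∈ Set.Ioo (0:ℝ) (1/2)) : 0 < g1Aux y := by
  have hanti : StrictAntiOn g1Aux (Set.Ioc 0 (1/2)) := by
    apply strictAntiOn_of_deriv_neg (convex_Ioc _ _)
    · intro z hz
      exact ((hasDerivAt_g1Aux ⟨hz.1, by linarith [hz.2]⟩).continuousAt).continuousWithinAt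
    · intro z hz
      rw [interior_Ioc] at hz
      rw [(hasDerivAt_g1Aux ⟨hz.1, by linarith [hz.2]⟩).deriv]
      exact g2Aux_neg ⟨hz.1, hz.2.le⟩
  have := hanti ⟨hy.1, hy.2.le⟩ (Set.right_mem_Ioc.2 (by norm_num)) hy.2
  rwa [g1Aux_half] at this

lemma gDer1_neg {y : ℝ} (hy : y ∈ Set.Ioo (0:ℝ) (1/2)) : gDer1 y < 0 := by
  have hmono : StrictMonoOn gDer1 (Set.Ioc 0 (1/2)) := by
    apply strictMonoOn_of_deriv_pos (convex_Ioc _ _)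
    · intro z hz
      exact ((hasDerivAt_gDer1 ⟨hz.1, by linarith [hz.2]⟩).continuousAt).continuousWithinAt
    · intro z hz
      rw [interior_Ioc] at hz
      rw [deriv_gDer1_eq ⟨hz.1, by linarith [hz.2]⟩]
      exact g1Aux_pos hz
  have := hmono ⟨hy.1, hy.2.le⟩ (Set.right_mem_Ioc.2 (by norm_num)) hy.2
  rwa [gDer1_half] at this
lemma ylogy_tendsto : Filter.Tendsto (fun y : ℝ => y * Real.log y) (nhdsWithin 0 (Set.Ioi 0)) (nhds 0) := by
  have h := tendsto_log_mul_rpow_nhdsGT_zero (one_pos (α := ℝ))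
  simpa [Real.rpow_one, mul_comm] using h

lemma fAux_atBot : Filter.Tendsto fAux (nhdsWithin 0 (Set.Ioi 0)) Filter.atBot := by
  have hA : Filter.Tendsto (fun y : ℝ => Real.log 2 * (1 - y)
      + (y * Real.log y + (1 - y) * Real.log (1 - y)) / 2)
      (nhdsWithin 0 (Set.Ioi 0)) (nhds (Real.log 2)) := by
    have h1 : Filter.Tendsto (fun y : ℝ => Real.log 2 * (1 - y)) (nhdsWithin 0 (Set.Ioi 0))
        (nhds (Real.log 2)) := by
      have : ContinuousAt (fun y : ℝ => Real.log 2 * (1 - y)) 0 := by fun_prop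
      simpa using this.continuousWithinAt.tendsto
    have h2 : Filter.Tendsto (fun y : ℝ => (1 - y) * Real.log (1 - y)) (nhdsWithin 0 (Set.Ioi 0))
        (nhds 0) := by
      have : ContinuousAt (fun y : ℝ => (1 - y) * Real.log (1 - y)) 0 := by
        have hl : ContinuousAt Real.log ((fun y : ℝ => 1 - y) 0) := by
          apply Real.continuousAt_log; norm_num
        exact (continuousAt_const.sub continuousAt_id).mul
          (hl.comp (continuousAt_const.sub continuousAt_id))
      simpa using this.continuousWithinAt.tendsto
    have h3 := (ylogy_tendsto.add h2).div_const 2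
    have := h1.add h3
    simpa using this
  have hB : Filter.Tendsto (fun y : ℝ => Real.log 2 / 2 * ((1 - y) * (Real.log y - Real.log (1 - y))))
      (nhdsWithin 0 (Set.Ioi 0)) Filter.atBot := by
    have hcoef : Filter.Tendsto (fun y : ℝ => Real.log 2 / 2 * (1 - y)) (nhdsWithin 0 (Set.Ioi 0))
        (nhds (Real.log 2 / 2)) := by
      have : ContinuousAt (fun y : ℝ => Real.log 2 / 2 * (1 - y)) 0 := by fun_prop
      simpa using this.continuousWithinAt.tendsto
    have hlogbot : Filter.Tendsto (fun y : ℝ => Real.log y - Real.log (1 - y))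
        (nhdsWithin 0 (Set.Ioi 0)) Filter.atBot := by
      have hl1 : Filter.Tendsto (fun y : ℝ => -Real.log (1 - y)) (nhdsWithin 0 (Set.Ioi 0))
          (nhds 0) := by
        have : ContinuousAt (fun y : ℝ => -Real.log (1 - y)) 0 := by
          have hl : ContinuousAt Real.log ((fun y : ℝ => 1 - y) 0) := by
            apply Real.continuousAt_log; norm_num
          exact (hl.comp (continuousAt_const.sub continuousAt_id)).neg
        simpa using this.continuousWithinAt.tendsto
      have := hl1.add_atBot Real.tendsto_log_nhdsGT_zero
      exact this.congr (fun y => by ring)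
    have hpos : (0:ℝ) < Real.log 2 / 2 := by positivity
    have := hcoef.pos_mul_atBot hpos hlogbot
    exact this.congr (fun y => by ring)
  have := hA.add_atBot hB
  refine this.congr (fun y => ?_)
  rw [fAux]; ring

lemma gDer1_atBot : Filter.Tendsto gDer1 (nhdsWithin 0 (Set.Ioi 0)) Filter.atBot := by
  refine fAux_atBot.congr' ?_
  filter_upwards [Ioo_mem_nhdsGT_of_mem (by norm_num : (0:ℝ) ∈ Set.Ico (0:ℝ) 1)] with z hz
  exact (fAux_eq hz).symm

lemma g1Aux_atTop : Filter.Tendsto g1Aux (nhdsWithin 0 (Set.Ioi 0)) Filter.atTop := by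
  have h1 : Filter.Tendsto (fun y : ℝ => -Real.log 2 - (1 - Real.log 2) / 2 * Real.log (1 - y))
      (nhdsWithin 0 (Set.Ioi 0)) (nhds (-Real.log 2)) := by
    have : ContinuousAt (fun y : ℝ => -Real.log 2 - (1 - Real.log 2) / 2 * Real.log (1 - y)) 0 := by
      have hl : ContinuousAt Real.log ((fun y : ℝ => 1 - y) 0) := by
        apply Real.continuousAt_log; norm_num
      exact continuousAt_const.sub (continuousAt_const.mul
        (hl.comp (continuousAt_const.sub continuousAt_id)))
    simpa using this.continuousWithinAt.tendsto
  have h2 : Filter.Tendsto (fun y : ℝ => y⁻¹ * (Real.log 2 / 2 + (1 - Real.log 2) / 2 * (y * Real.log y)))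
      (nhdsWithin 0 (Set.Ioi 0)) Filter.atTop := by
    have hlim : Filter.Tendsto (fun y : ℝ => Real.log 2 / 2 + (1 - Real.log 2) / 2 * (y * Real.log y))
        (nhdsWithin 0 (Set.Ioi 0)) (nhds (Real.log 2 / 2)) := by
      have := (tendsto_const_nhds (f := nhdsWithin (0:ℝ) (Set.Ioi 0)) (x := Real.log 2 / 2)).add
        ((ylogy_tendsto.const_mul ((1 - Real.log 2) / 2)))
      simpa using this
    exact tendsto_inv_nhdsGT_zero.atTop_mul_pos (by positivity) hlim
  have := h1.add_atTop h2
  refine this.congr' ?_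
  filter_upwards [self_mem_nhdsWithin] with y (hy : 0 < y)
  rw [g1Aux]
  field_simp
  ring

lemma deriv_gDer1_atTop : Filter.Tendsto (fun y => deriv gDer1 y) (nhdsWithin 0 (Set.Ioi 0)) Filter.atTop := by
  refine g1Aux_atTop.congr' ?_
  filter_upwards [Ioo_mem_nhdsGT_of_mem (by norm_num : (0:ℝ) ∈ Set.Ico (0:ℝ) 1)] with z hz
  exact (deriv_gDer1_eq hz).symm

/-- Properties of `g(y) = log 2 ((1-y)(1 + (1/2) log(y/(1-y))) - h₂(y)/2)`: it vanishes
at `1/2`, tends to `-∞` as `y → 0⁺`, has vanishing derivative at `1/2` and derivative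
tending to `+∞` as `y → 0⁺`, has negative second derivative on `(0,1/2]`, and is negative
on `(0,1/2)`. -/
theorem gDer1_properties :
    gDer1 (1 / 2) = 0 ∧
    Filter.Tendsto gDer1 (nhdsWithin 0 (Set.Ioi 0)) Filter.atBot ∧
    deriv gDer1 (1 / 2) = 0 ∧
    Filter.Tendsto (fun y => deriv gDer1 y) (nhdsWithin 0 (Set.Ioi 0)) Filter.atTop ∧
    (∀ y ∈ Set.Ioc (0 : ℝ) (1 / 2),
      deriv (deriv gDer1) y = (y - Real.log 2) / (2 * (1 - y) * y ^ 2) ∧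
      deriv (deriv gDer1) y < 0) ∧
    (∀ y ∈ Set.Ioo (0 : ℝ) (1 / 2), gDer1 y < 0) := by
  refine ⟨gDer1_half, gDer1_atBot, ?_, deriv_gDer1_atTop, ?_, fun y hy => gDer1_neg hy⟩
  · rw [deriv_gDer1_eq (by norm_num : (1:ℝ)/2 ∈ Set.Ioo (0:ℝ) 1), g1Aux_half]
  · intro y hy
    have hy' : y ∈ Set.Ioo (0:ℝ) 1 := ⟨hy.1, by linarith [hy.2]⟩
    constructor
    · rw [sderiv_eq hy']; rfl
    · rw [sderiv_eq hy']; exact g2Aux_neg hy
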